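/- Let T be a monad on Type and ρ : T ∘ F ⟹ F ∘ T a natural transformation additionally satisfying the unit law ρ_X ∘ η_{F X} = F(η_X) for all X. Given a deterministic automaton (R, δ), define the determinization δ̂ := ((Prod.map id (η_R ∘ ·)) ∘ δ)^♯ : T R → O × (A → T R). Then η_R is a homomorphism of deterministic automata from (R, δ) to (T R, δ̂), i.e., δ̂ ∘ η_R = (Prod.map id (η_R ∘ ·)) ∘ δ, and consequently l_{T R}(η_R(x)) = l_R(x) for every x ∈ R: the automata (R, δ) and (T R, δ̂) accept the same languages. -/

import Mathlib

open CategoryTheory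

universe u

/-- The language map of a deterministic automaton `(X, δ)` with outputs in `O`. -/
def detLang {A O X : Type u} (δ : X → O × (A → X)) : X → List A → O
  | x, [] => (δ x).1
  | x, a :: w => detLang δ ((δ x).2 a) w

/-- The free `T`-extension of `h : Y → F (T Y)`, where `F X = O × (A → X)`,
with respect to a distributive-law-like family `ρ : T ∘ F ⟹ F ∘ T`:
`h^♯ = F μ_Y ∘ ρ_{T Y} ∘ T h`. -/
def freeExtAut {T : Monad (Type u)} {A O : Type u}
    (ρ : ∀ X : Type u, T.toFunctor.obj (O × (A → X)) → O × (A → T.toFunctor.obj X))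
    {Y : Type u} (h : Y → O × (A → T.toFunctor.obj Y)) :
    T.toFunctor.obj Y → O × (A → T.toFunctor.obj Y) :=
  Prod.map (id : O → O)
      (fun k : A → T.toFunctor.obj (T.toFunctor.obj Y) => T.μ.app Y ∘ k)
    ∘ ρ (T.toFunctor.obj Y) ∘ T.toFunctor.map (TypeCat.ofHom h)

theorem detLang_hom {A O X Y : Type u} (δ : X → O × (A → X)) (δ' : Y → O × (A → Y))
    (f : X → Y) (h : δ' ∘ f = Prod.map (id : O → O) (fun k : A → X => f ∘ k) ∘ δ) :
    ∀ (w : List A) (x : X), detLang δ' (f x) w = detLang δ x w := by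
  intro w
  induction w with
  | nil =>
    intro x
    have := congrFun h x
    simp only [Function.comp_apply] at this
    simp [detLang, this]
  | cons a w ih =>
    intro x
    have := congrFun h x
    simp only [Function.comp_apply] at this
    simp only [detLang, this]
    exact ih _

/-- if `ρ : T ∘ F ⟹ F ∘ T` is a natural transformation additionally
satisfying the unit law `ρ_X ∘ η_{F X} = F η_X`, then for any deterministic automaton
`(R, δ)` with determinization `δ̂ = (F η_R ∘ δ)^♯ : T R → O × (A → T R)`, the unit `η_R`
is a homomorphism of deterministic automata from `(R, δ)` to `(T R, δ̂)`, and
consequently `l_{T R}(η_R x) = l_R x` for every `x : R`: both automata accept the same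
languages. -/
theorem determinization_preserves_language
    (T : Monad (Type u)) (A O : Type u)
    (ρ : ∀ X : Type u, T.toFunctor.obj (O × (A → X)) → O × (A → T.toFunctor.obj X))
    (hρnat : ∀ (X Y : Type u) (f : X → Y),
      ρ Y ∘ T.toFunctor.map (TypeCat.ofHom (Prod.map (id : O → O) (fun k : A → X => f ∘ k)))
        = Prod.map (id : O → O)
            (fun k : A → T.toFunctor.obj X => T.toFunctor.map (TypeCat.ofHom f) ∘ k) ∘ ρ X)
    (hρunit : ∀ X : Type u,
      ρ X ∘ T.η.app (O × (A → X))
        = Prod.map (id : O → O) (fun k : A → X => T.η.app X ∘ k))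
    (R : Type u) (δ : R → O × (A → R)) :
    (freeExtAut ρ (Prod.map (id : O → O) (fun k : A → R => T.η.app R ∘ k) ∘ δ)
        ∘ T.η.app R
      = Prod.map (id : O → O) (fun k : A → R => T.η.app R ∘ k) ∘ δ)
    ∧ ∀ x : R,
        detLang (freeExtAut ρ (Prod.map (id : O → O) (fun k : A → R => T.η.app R ∘ k) ∘ δ))
            (T.η.app R x)
          = detLang δ x := by
  set h := Prod.map (id : O → O) (fun k : A → R => T.η.app R ∘ k) ∘ δ with hh
  have hom : freeExtAut ρ h ∘ T.η.app R = h := by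
    funext y
    simp only [freeExtAut, Function.comp_apply]
    have h1 : T.toFunctor.map (TypeCat.ofHom h) (T.η.app R y) = T.η.app _ (h y) :=
      (ConcreteCategory.congr_hom (T.η.naturality (TypeCat.ofHom h)) y).symm
    rw [h1]
    have h2 := congrFun (hρunit (T.toFunctor.obj R)) (h y)
    simp only [Function.comp_apply] at h2
    rw [h2]
    ext
    · rfl
    · simp only [Prod.map, Function.comp_apply]
      exact ConcreteCategory.congr_hom (T.left_unit R) _
  exact ⟨hom, fun x => funext fun w => detLang_hom _ _ _ hom w x⟩
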